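/- Let n and d be positive integers and let I ⊆ V be a homogeneous radical ideal. Then Υ(I) is a radical ideal of S. -/

import Mathlib

/-!
Common setup, following the paper "On the abundance of minimal border rank symmetric
tensors verifying Comon's conjecture".

* `S = ℂ[α_{i,j} : 1 ≤ i ≤ d, 1 ≤ j ≤ n]` is modeled as `MvPolynomial (Fin d × Fin n) ℂ`,
  with the `ℤ^d`-grading in which `deg α_{i,j} = e_i`; `Scomp n d u` is the
  multidegree-`u` component (`u : Fin d → ℕ`).
* `V = ℂ[β_1,…,β_n]` is modeled as `MvPolynomial (Fin n) ℂ` with its standard grading;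
  `Vcomp n N` is the degree-`N` component.
* The graded duals `T` and `P` are modeled by the same polynomial rings, with `S`
  (resp. `V`) acting by differentiation (`apolar`); `ann F` is the apolar
  (annihilator) ideal of `F`.
* A tensor `F ∈ (ℂ^n)^{⊗d}` is an element of the multidegree-`(1,…,1)` component
  `Scomp n d (fun _ => 1)` (a multilinear form in the `x_{i,j}`).
-/

open MvPolynomial Submodule Module

noncomputable section

namespace BorderComon

/-- the multidegree-`u` graded component of `S`. -/
def Scomp (n d : ℕ) (u : Fin d → ℕ) : Submodule ℂ (MvPolynomial (Fin d × Fin n) ℂ) :=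
  weightedHomogeneousSubmodule ℂ (fun p : Fin d × Fin n => Pi.single p.1 1) u

/-- the degree-`N` graded component of `V`. -/
def Vcomp (n : ℕ) (N : ℕ) : Submodule ℂ (MvPolynomial (Fin n) ℂ) :=
  homogeneousSubmodule (Fin n) ℂ N

/-- the diagonal ring map `π : S → V`, `α_{i,j} ↦ β_j`. -/
def piAlg (n d : ℕ) : MvPolynomial (Fin d × Fin n) ℂ →ₐ[ℂ] MvPolynomial (Fin n) ℂ :=
  aeval (fun p : Fin d × Fin n => X p.2)

/-- `π` as a `ℂ`-linear map. -/
def piL (n d : ℕ) : MvPolynomial (Fin d × Fin n) ℂ →ₗ[ℂ] MvPolynomial (Fin n) ℂ :=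
  (piAlg n d).toLinearMap

/-- the ring map `ρ : S → V`, `α_{1,j} ↦ β_j` and `α_{i,j} ↦ 0` for `i ≥ 2`
(rows are `0`-indexed, so the first row is row `0`). -/
def rho (n d : ℕ) : MvPolynomial (Fin d × Fin n) ℂ →ₐ[ℂ] MvPolynomial (Fin n) ℂ :=
  aeval (fun p : Fin d × Fin n => if (p.1 : ℕ) = 0 then X p.2 else 0)

/-- the result of differentiating `F` by the monomial `X^a`:
`∂^a X^b = (∏_i b_i!/(b_i-a_i)!) X^{b-a}` (and `= 0` unless `a ≤ b`, which is
automatic since the descending factorial vanishes there). -/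
def diffMon {σ : Type*} (a : σ →₀ ℕ) (F : MvPolynomial σ ℂ) : MvPolynomial σ ℂ :=
  ∑ b ∈ F.support, (F.coeff b * ∏ i ∈ a.support, ((b i).descFactorial (a i) : ℂ)) •
    monomial (b - a) (1 : ℂ)

/-- the apolarity action: `apolar F ψ = ψ ∘ F` is the result of letting `ψ` act on `F`
by differentiation, linearly in `ψ`. -/
def apolar {σ : Type*} (F : MvPolynomial σ ℂ) : MvPolynomial σ ℂ →ₗ[ℂ] MvPolynomial σ ℂ :=
  Finsupp.lsum ℂ (fun a : σ →₀ ℕ => LinearMap.toSpanSingleton ℂ _ (diffMon a F)) ∘ₗ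
    (AddMonoidAlgebra.coeffLinearEquiv ℂ : MvPolynomial σ ℂ ≃ₗ[ℂ] _).toLinearMap

/-- the apolar (annihilator) ideal `Ann(F) = {ψ : ψ ∘ F = 0}`, as a subspace. -/
def ann {σ : Type*} (F : MvPolynomial σ ℂ) : Submodule ℂ (MvPolynomial σ ℂ) :=
  LinearMap.ker (apolar F)

/-- the ideal `I_R ⊆ S` generated by the `2×2` minors
`α_{i,j} α_{k,ℓ} − α_{i,ℓ} α_{k,j}`, `i < k`, `j < ℓ`. -/
def IR (n d : ℕ) : Ideal (MvPolynomial (Fin d × Fin n) ℂ) :=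
  Ideal.span {q | ∃ i k : Fin d, ∃ j l : Fin n, i < k ∧ j < l ∧
    q = X (i, j) * X (k, l) - X (i, l) * X (k, j)}

/-- `J ⊆ S` is a (multigraded) homogeneous ideal: it is the sum of its
multigraded components. -/
def IsHomogS (n d : ℕ) (J : Ideal (MvPolynomial (Fin d × Fin n) ℂ)) : Prop :=
  Submodule.restrictScalars ℂ J = ⨆ u : Fin d → ℕ, (Submodule.restrictScalars ℂ J ⊓ Scomp n d u)

/-- `I ⊆ V` is a homogeneous ideal: it is the sum of its graded components. -/
def IsHomogV (n : ℕ) (I : Ideal (MvPolynomial (Fin n) ℂ)) : Prop :=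
  Submodule.restrictScalars ℂ I = ⨆ N : ℕ, (Submodule.restrictScalars ℂ I ⊓ Vcomp n N)

/-- the exponent redistribution underlying `ψ_u`: in the sorted list
`i_1 ≤ ⋯ ≤ i_N` of the indices of the monomial `β^γ` (value `j` occurring `γ j`
times, `N = |γ|`), row `i` receives the block of positions
`[∑_{i'<i} u i', ∑_{i'≤i} u i')`, while value `j` occupies positions
`[∑_{j'<j} γ j', ∑_{j'≤j} γ j')`; hence the exponent of `α_{i,j}` is the size of
the intersection of these two intervals. -/
def distrib (n d : ℕ) (u : Fin d → ℕ) (γ : Fin n →₀ ℕ) : (Fin d × Fin n) →₀ ℕ :=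
  Finsupp.equivFunOnFinite.symm fun p : Fin d × Fin n =>
    min (∑ i ∈ Finset.univ.filter fun i : Fin d => (i : ℕ) ≤ (p.1 : ℕ), u i)
        (∑ j ∈ Finset.univ.filter fun j : Fin n => (j : ℕ) ≤ (p.2 : ℕ), γ j)
    - max (∑ i ∈ Finset.univ.filter fun i : Fin d => (i : ℕ) < (p.1 : ℕ), u i)
          (∑ j ∈ Finset.univ.filter fun j : Fin n => (j : ℕ) < (p.2 : ℕ), γ j)

/-- the linear map `ψ_u : V → S` sending a monomial `β_{i_1} β_{i_2} ⋯ β_{i_N}`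
with `i_1 ≤ i_2 ≤ ⋯ ≤ i_N` to
`(α_{1,i_1} ⋯ α_{1,i_{u_1}}) (α_{2,i_{u_1+1}} ⋯ α_{2,i_{u_1+u_2}}) ⋯`.
(Its restriction to `Vcomp n (∑ i, u i)` is the map `ψ_u : V_{|u|} → S_u` of the
paper.) -/
def psi (n d : ℕ) (u : Fin d → ℕ) :
    MvPolynomial (Fin n) ℂ →ₗ[ℂ] MvPolynomial (Fin d × Fin n) ℂ :=
  (AddMonoidAlgebra.coeffLinearEquiv ℂ :
      MvPolynomial (Fin d × Fin n) ℂ ≃ₗ[ℂ] _).symm.toLinearMap ∘ₗ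
    Finsupp.lmapDomain ℂ ℂ (distrib n d u) ∘ₗ
    (AddMonoidAlgebra.coeffLinearEquiv ℂ : MvPolynomial (Fin n) ℂ ≃ₗ[ℂ] _).toLinearMap

/-- `Υ(I) = I_R + ∑_{u} ψ_u(I_{|u|}) ⊆ S`. -/
def Upsilon (n d : ℕ) (I : Ideal (MvPolynomial (Fin n) ℂ)) :
    Submodule ℂ (MvPolynomial (Fin d × Fin n) ℂ) :=
  restrictScalars ℂ (IR n d) ⊔
    ⨆ u : Fin d → ℕ, Submodule.map (psi n d u) (restrictScalars ℂ I ⊓ Vcomp n (∑ i, u i))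

/-- the irrelevant ideal `B_X = ∏_{i=1}^d (α_{i,1},…,α_{i,n}) ⊆ S`. -/
def BX (n d : ℕ) : Ideal (MvPolynomial (Fin d × Fin n) ℂ) :=
  ∏ i : Fin d, Ideal.span (Set.range fun j : Fin n => X (i, j))

/-- the irrelevant ideal `B_Y = (β_1,…,β_n) ⊆ V`. -/
def BY (n : ℕ) : Ideal (MvPolynomial (Fin n) ℂ) :=
  Ideal.span (Set.range X)

/-- `Σ(J) = ⊕_{a ≥ 0} ⊕_{s ∈ ℰ} π(J_{a𝟏+s}) ⊆ V`, where
`ℰ = {0, e_1, e_1+e_2, …, e_1+⋯+e_{d-1}}` (the element `s` with `m` ones is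
`fun i => if i < m then 1 else 0`). -/
def SigmaMap (n d : ℕ) (J : Ideal (MvPolynomial (Fin d × Fin n) ℂ)) :
    Submodule ℂ (MvPolynomial (Fin n) ℂ) :=
  ⨆ a : ℕ, ⨆ m : Fin d, Submodule.map (piL n d)
    (restrictScalars ℂ J ⊓ Scomp n d (fun i => a + if (i : ℕ) < (m : ℕ) then 1 else 0))

/-- the set of tensors of rank at most `r`: sums of `r` decomposable tensors
`v_1 ⊗ ⋯ ⊗ v_d = ∏_i (∑_j v_i(j) x_{i,j})`. -/
def rankLE (n d r : ℕ) : Set (MvPolynomial (Fin d × Fin n) ℂ) :=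
  {F | ∃ v : Fin r → Fin d → Fin n → ℂ,
    F = ∑ s : Fin r, ∏ i : Fin d, ∑ j : Fin n, C (v s i j) * X (i, j)}

/-- `F` has border rank at most `r`: coefficientwise (finitely many coefficients are
involved), `F` lies in the closure of the set of tensors of rank at most `r`. -/
def brkLE (n d : ℕ) (F : MvPolynomial (Fin d × Fin n) ℂ) (r : ℕ) : Prop :=
  (fun m => coeff m F) ∈ closure ((fun G => fun m => coeff m G) '' rankLE n d r)

/-- the border rank of a tensor. -/
def brk (n d : ℕ) (F : MvPolynomial (Fin d × Fin n) ℂ) : ℕ :=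
  sInf {r | brkLE n d F r}

/-- polynomials that are sums of `r` `d`-th powers of linear forms. -/
def srankLE (n d r : ℕ) : Set (MvPolynomial (Fin n) ℂ) :=
  {p | ∃ c : Fin r → Fin n → ℂ, p = ∑ s : Fin r, (∑ j : Fin n, C (c s j) * X j) ^ d}

/-- `p` has symmetric border rank at most `r`. -/
def sbrkLE (n d : ℕ) (p : MvPolynomial (Fin n) ℂ) (r : ℕ) : Prop :=
  (fun m => coeff m p) ∈ closure ((fun q => fun m => coeff m q) '' srankLE n d r)

/-- the symmetric border rank of a degree-`d` form. -/
def sbrk (n d : ℕ) (p : MvPolynomial (Fin n) ℂ) : ℕ :=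
  sInf {r | sbrkLE n d p r}

/-- `F` is a symmetric tensor: invariant under the permutations of the `d` factors. -/
def IsSymm (n d : ℕ) (F : MvPolynomial (Fin d × Fin n) ℂ) : Prop :=
  ∀ τ : Equiv.Perm (Fin d), rename (Prod.map τ id) F = F

/-- the degree-`d` polynomial `p_F` corresponding to a symmetric tensor `F`, obtained
by identifying all the rows of variables (`x_{i,j} ↦ y_j`); `F` is the polarization
of `p_F`. -/
def pF (n d : ℕ) (F : MvPolynomial (Fin d × Fin n) ℂ) : MvPolynomial (Fin n) ℂ :=
  rename Prod.snd F

/-- `F` is concise: the contraction `(ℂ^n)^* → (ℂ^n)^{⊗(d-1)}` of the first tensor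
factor, `w ↦ F(x_{1,j} := w_j)`, is injective. -/
def Concise (n d : ℕ) (F : MvPolynomial (Fin d × Fin n) ℂ) : Prop :=
  Function.Injective fun w : Fin n → ℂ =>
    aeval (fun p : Fin d × Fin n => if (p.1 : ℕ) = 0 then C (w p.2) else X p) F

/-- the ideal `∑_{0<u<𝟏} S·Ann(F)_u` generated by the components `Ann(F)_u`,
`0 < u < 𝟏` (componentwise). -/
def midIdeal (n d : ℕ) (F : MvPolynomial (Fin d × Fin n) ℂ) :
    Ideal (MvPolynomial (Fin d × Fin n) ℂ) :=
  Ideal.span (⋃ u ∈ {u : Fin d → ℕ | 0 < u ∧ u < fun _ => 1},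
    ((ann F ⊓ Scomp n d u : Submodule ℂ (MvPolynomial (Fin d × Fin n) ℂ)) :
      Set (MvPolynomial (Fin d × Fin n) ℂ)))

/-- `F` is a *sharp* tensor:
(1) `Ann(F)` has exactly `n-1` minimal generators of multidegree `𝟏`;
(2) `dim (S/Ann F)_u = n` for all `0 < u < 𝟏`;
(3) `dim (S/(Ann(F)_{e_i+e_j}))_{s e_i + e_j} = n` for all `i ≠ j`, `1 ≤ s ≤ d-1`. -/
def Sharp (n d : ℕ) (F : MvPolynomial (Fin d × Fin n) ℂ) : Prop :=
  (finrank ℂ (ann F ⊓ Scomp n d fun _ => 1 :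
        Submodule ℂ (MvPolynomial (Fin d × Fin n) ℂ)) -
      finrank ℂ (restrictScalars ℂ (midIdeal n d F) ⊓ Scomp n d fun _ => 1 :
        Submodule ℂ (MvPolynomial (Fin d × Fin n) ℂ)) = n - 1) ∧
  (∀ u : Fin d → ℕ, 0 < u → u < (fun _ => 1) →
    finrank ℂ (Scomp n d u ⧸ Submodule.comap (Scomp n d u).subtype (ann F)) = n) ∧
  (∀ i j : Fin d, i ≠ j → ∀ s : ℕ, 1 ≤ s → s ≤ d - 1 →
    finrank ℂ (Scomp n d (Pi.single i s + Pi.single j 1) ⧸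
      Submodule.comap (Scomp n d (Pi.single i s + Pi.single j 1)).subtype
        (restrictScalars ℂ (Ideal.span
          ((ann F ⊓ Scomp n d (Pi.single i 1 + Pi.single j 1) :
            Submodule ℂ (MvPolynomial (Fin d × Fin n) ℂ)) :
            Set (MvPolynomial (Fin d × Fin n) ℂ))))) = n)

/-! ### Auxiliary development for stmt_6 -/

/-- extension of a `Fin d`-indexed family to `ℕ` by zero. -/
def extF {d : ℕ} (u : Fin d → ℕ) : ℕ → ℕ := fun x => if h : x < d then u ⟨x, h⟩ else 0

/-- cumulative sums. -/
def cum {d : ℕ} (u : Fin d → ℕ) (m : ℕ) : ℕ := ∑ x ∈ Finset.range m, extF u x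

lemma cum_succ {d : ℕ} (u : Fin d → ℕ) (m : ℕ) : cum u (m + 1) = cum u m + extF u m :=
  Finset.sum_range_succ _ _

lemma cum_le_succ {d : ℕ} (u : Fin d → ℕ) (m : ℕ) : cum u m ≤ cum u (m + 1) := by
  rw [cum_succ]; omega

lemma cum_mono {d : ℕ} (u : Fin d → ℕ) : Monotone (cum u) :=
  monotone_nat_of_le_succ (cum_le_succ u)


lemma filter_sum_lt' {d : ℕ} (u : Fin d → ℕ) (m : ℕ) (hm : m ≤ d) :
    ∑ i ∈ Finset.univ.filter (fun i : Fin d => (i : ℕ) < m), u i = cum u m := by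
  rw [Finset.sum_filter]
  have h1 : ∀ i : Fin d, (if (i : ℕ) < m then u i else 0)
      = (fun x => if x < m then extF u x else 0) (i : ℕ) := by
    intro i; simp [extF, i.isLt]
  rw [Finset.sum_congr rfl fun i _ => h1 i,
    Fin.sum_univ_eq_sum_range (fun x => if x < m then extF u x else 0) d,
    ← Finset.sum_filter]
  have h : (Finset.range d).filter (fun x => x < m) = Finset.range m := by
    ext x; simp only [Finset.mem_filter, Finset.mem_range]; omega
  rw [h, cum]

lemma filter_sum_le {d : ℕ} (u : Fin d → ℕ) (t : Fin d) :
    ∑ i ∈ Finset.univ.filter (fun i : Fin d => (i : ℕ) ≤ (t : ℕ)), u i = cum u ((t : ℕ) + 1) := by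
  rw [← filter_sum_lt' u ((t : ℕ) + 1) t.isLt]
  congr 1; ext i; simp [Nat.lt_succ_iff]

lemma filter_sum_lt'' {d : ℕ} (u : Fin d → ℕ) (t : Fin d) :
    ∑ i ∈ Finset.univ.filter (fun i : Fin d => (i : ℕ) < (t : ℕ)), u i = cum u (t : ℕ) :=
  filter_sum_lt' u _ (le_of_lt t.isLt)

lemma distrib_apply (n d : ℕ) (u : Fin d → ℕ) (γ : Fin n →₀ ℕ) (p : Fin d × Fin n) :
    distrib n d u γ p =
      min (cum u ((p.1 : ℕ) + 1)) (cum (⇑γ) ((p.2 : ℕ) + 1))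
        - max (cum u (p.1 : ℕ)) (cum (⇑γ) (p.2 : ℕ)) := by
  show (Finsupp.equivFunOnFinite.symm _ : _ →₀ ℕ) p = _
  rw [Finsupp.coe_equivFunOnFinite_symm]
  rw [filter_sum_le u p.1, filter_sum_le (⇑γ) p.2, filter_sum_lt'' u p.1, filter_sum_lt'' (⇑γ) p.2]
/-- clamp telescoping sum. -/
lemma tele_sum (g : ℕ → ℕ) (hg : ∀ k, g k ≤ g (k + 1)) (hg0 : g 0 = 0)
    (A A' : ℕ) (hA : A ≤ A') (m : ℕ) :
    ∑ k ∈ Finset.range m, (min A' (g (k + 1)) - max A (g k))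
      = min A' (max A (g m)) - A := by
  induction m with
  | zero => simp only [Finset.range_zero, Finset.sum_empty, hg0]; omega
  | succ m ih => rw [Finset.sum_range_succ, ih]; have := hg m; omega

/-- row content of an exponent. -/
def rowF {n d : ℕ} (b : Fin d × Fin n →₀ ℕ) : Fin d →₀ ℕ := b.mapDomain Prod.fst

/-- column content of an exponent. -/
def colF {n d : ℕ} (b : Fin d × Fin n →₀ ℕ) : Fin n →₀ ℕ := b.mapDomain Prod.snd

lemma mapDomain_apply_eq_sum {α β M : Type*} [Fintype α] [DecidableEq β] [AddCommMonoid M]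
    (f : α → β) (b : α →₀ M) (y : β) :
    Finsupp.mapDomain f b y = ∑ x : α, if f x = y then b x else 0 := by
  rw [Finsupp.mapDomain, Finsupp.sum_apply]
  rw [Finsupp.sum]
  rw [Finset.sum_subset (Finset.subset_univ b.support)]
  · exact Finset.sum_congr rfl fun x _ => Finsupp.single_apply
  · intro x _ hx
    simp [Finsupp.notMem_support_iff.mp hx]

lemma rowF_apply {n d : ℕ} (b : Fin d × Fin n →₀ ℕ) (i : Fin d) :
    rowF b i = ∑ j : Fin n, b (i, j) := by
  rw [rowF, mapDomain_apply_eq_sum, Fintype.sum_prod_type]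
  rw [Finset.sum_eq_single i]
  · apply Finset.sum_congr rfl; intro j _; simp
  · intro k _ hk; apply Finset.sum_eq_zero; intro j _; simp [hk]
  · simp

lemma colF_apply {n d : ℕ} (b : Fin d × Fin n →₀ ℕ) (j : Fin n) :
    colF b j = ∑ i : Fin d, b (i, j) := by
  rw [colF, mapDomain_apply_eq_sum, Fintype.sum_prod_type_right]
  rw [Finset.sum_eq_single j]
  · apply Finset.sum_congr rfl; intro i _; simp
  · intro k _ hk; apply Finset.sum_eq_zero; intro i _; simp [hk]
  · simp

lemma cum_top {d : ℕ} (u : Fin d → ℕ) : cum u d = ∑ i : Fin d, u i := by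
  rw [cum, ← Fin.sum_univ_eq_sum_range (extF u) d]
  apply Finset.sum_congr rfl; intro i _; simp [extF, i.isLt]

/-- row content of `distrib`. -/
lemma rowF_distrib (n d : ℕ) (u : Fin d → ℕ) (γ : Fin n →₀ ℕ)
    (h : cum (⇑γ) n = cum u d) (i : Fin d) :
    rowF (distrib n d u γ) i = u i := by
  rw [rowF_apply]
  have h1 : ∀ j : Fin n, distrib n d u γ (i, j)
      = (fun k => min (cum u ((i : ℕ) + 1)) (cum (⇑γ) (k + 1))
          - max (cum u (i : ℕ)) (cum (⇑γ) k)) (j : ℕ) := by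
    intro j; simp only [distrib_apply]
  rw [Finset.sum_congr rfl fun j _ => h1 j,
    Fin.sum_univ_eq_sum_range (fun k => min (cum u ((i : ℕ) + 1)) (cum (⇑γ) (k + 1))
      - max (cum u (i : ℕ)) (cum (⇑γ) k)) n,
    tele_sum (cum (⇑γ)) (cum_le_succ _) rfl _ _ (cum_le_succ u (i : ℕ))]
  have h2 : cum u ((i : ℕ) + 1) ≤ cum u d := cum_mono u i.isLt
  have h3 : cum u (i : ℕ) ≤ cum u ((i : ℕ) + 1) := cum_le_succ u _
  have h4 : cum u ((i : ℕ) + 1) = cum u (i : ℕ) + u i := by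
    rw [cum_succ]; simp [extF, i.isLt]
  omega

/-- column content of `distrib`. -/
lemma colF_distrib (n d : ℕ) (u : Fin d → ℕ) (γ : Fin n →₀ ℕ)
    (h : cum (⇑γ) n = cum u d) (j : Fin n) :
    colF (distrib n d u γ) j = γ j := by
  rw [colF_apply]
  have h1 : ∀ i : Fin d, distrib n d u γ (i, j)
      = (fun k => min (cum (⇑γ) ((j : ℕ) + 1)) (cum u (k + 1))
          - max (cum (⇑γ) (j : ℕ)) (cum u k)) (i : ℕ) := by
    intro i; simp only [distrib_apply]; omega
  rw [Finset.sum_congr rfl fun i _ => h1 i,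
    Fin.sum_univ_eq_sum_range (fun k => min (cum (⇑γ) ((j : ℕ) + 1)) (cum u (k + 1))
      - max (cum (⇑γ) (j : ℕ)) (cum u k)) d,
    tele_sum (cum u) (cum_le_succ _) rfl _ _ (cum_le_succ (⇑γ) (j : ℕ))]
  have h2 : cum (⇑γ) ((j : ℕ) + 1) ≤ cum (⇑γ) n := cum_mono (⇑γ) j.isLt
  have h3 : cum (⇑γ) (j : ℕ) ≤ cum (⇑γ) ((j : ℕ) + 1) := cum_le_succ (⇑γ) _
  have h4 : cum (⇑γ) ((j : ℕ) + 1) = cum (⇑γ) (j : ℕ) + γ j := by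
    rw [cum_succ]; simp [extF, j.isLt]
  omega
section NoInv

variable {n d : ℕ}

/-- exponents extended to `ℕ × ℕ`. -/
def bext (b : Fin d × Fin n →₀ ℕ) (x y : ℕ) : ℕ :=
  if h : x < d ∧ y < n then b (⟨x, h.1⟩, ⟨y, h.2⟩) else 0

/-- 2D partial sums. -/
def Bpart (b : Fin d × Fin n →₀ ℕ) (m t : ℕ) : ℕ :=
  ∑ x ∈ Finset.range m, ∑ y ∈ Finset.range t, bext b x y

lemma Bpart_right (b : Fin d × Fin n →₀ ℕ) (m : ℕ) : Bpart b m n = cum (⇑(rowF b)) m := by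
  apply Finset.sum_congr rfl
  intro x hx
  by_cases h : x < d
  · rw [show extF (⇑(rowF b)) x = rowF b ⟨x, h⟩ by simp [extF, h]]
    rw [rowF_apply, ← Fin.sum_univ_eq_sum_range (fun y => bext b x y) n]
    apply Finset.sum_congr rfl
    intro y _
    simp [bext, h, y.isLt]
  · rw [show extF (⇑(rowF b)) x = 0 by simp [extF, h]]
    apply Finset.sum_eq_zero; intro y _; simp [bext, h]

lemma Bpart_top (b : Fin d × Fin n →₀ ℕ) (t : ℕ) : Bpart b d t = cum (⇑(colF b)) t := by
  rw [Bpart, Finset.sum_comm]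
  apply Finset.sum_congr rfl
  intro y hy
  by_cases h : y < n
  · rw [show extF (⇑(colF b)) y = colF b ⟨y, h⟩ by simp [extF, h]]
    rw [colF_apply, ← Fin.sum_univ_eq_sum_range (fun x => bext b x y) d]
    apply Finset.sum_congr rfl
    intro x _
    simp [bext, h, x.isLt]
  · rw [show extF (⇑(colF b)) y = 0 by simp [extF, h]]
    apply Finset.sum_eq_zero; intro x _; simp [bext, h]

lemma Bpart_le_right (b : Fin d × Fin n →₀ ℕ) (m t : ℕ) (ht : t ≤ n) :
    Bpart b m t ≤ Bpart b m n := by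
  apply Finset.sum_le_sum
  intro x _
  exact Finset.sum_le_sum_of_subset (Finset.range_subset_range.mpr ht)

lemma Bpart_le_top (b : Fin d × Fin n →₀ ℕ) (m t : ℕ) (hm : m ≤ d) :
    Bpart b m t ≤ Bpart b d t :=
  Finset.sum_le_sum_of_subset (Finset.range_subset_range.mpr hm)

/-- no inversions: larger rows never use strictly smaller columns. -/
def NoInv (b : Fin d × Fin n →₀ ℕ) : Prop :=
  ∀ i k : Fin d, ∀ j l : Fin n, i < k → l < j → b (i, j) = 0 ∨ b (k, l) = 0

lemma Bpart_eq_min {b : Fin d × Fin n →₀ ℕ} (h : NoInv b) (m t : ℕ) (hm : m ≤ d) (ht : t ≤ n) :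
    Bpart b m t = min (Bpart b m n) (Bpart b d t) := by
  rcases eq_or_lt_of_le (Bpart_le_right b m t ht) with heq | hlt
  · have := Bpart_le_top b m t hm
    omega
  · -- there is mass at some (x0, y0), x0 < m, t ≤ y0 < n
    have hsplit : Bpart b m n = Bpart b m t
        + ∑ x ∈ Finset.range m, ∑ y ∈ Finset.Ico t n, bext b x y := by
      rw [Bpart, Bpart, ← Finset.sum_add_distrib]
      apply Finset.sum_congr rfl
      intro x _
      rw [Finset.range_eq_Ico,
        ← Finset.sum_Ico_consecutive _ (Nat.zero_le t) ht]
      rw [← Finset.range_eq_Ico]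
    have hpos : ∑ x ∈ Finset.range m, ∑ y ∈ Finset.Ico t n, bext b x y ≠ 0 := by omega
    obtain ⟨x0, hx0, hx0'⟩ := Finset.exists_ne_zero_of_sum_ne_zero hpos
    obtain ⟨y0, hy0, hy0'⟩ := Finset.exists_ne_zero_of_sum_ne_zero hx0'
    simp only [Finset.mem_range] at hx0
    simp only [Finset.mem_Ico] at hy0
    have hx0d : x0 < d := lt_of_lt_of_le hx0 hm
    -- all mass in columns < t lies in rows < m
    have hzero : ∀ x ∈ Finset.Ico m d, ∀ y ∈ Finset.range t, bext b x y = 0 := by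
      intro x hx y hy
      simp only [Finset.mem_Ico] at hx
      simp only [Finset.mem_range] at hy
      have hxd : x < d := hx.2
      have hyn : y < n := lt_of_lt_of_le hy ht
      rcases h ⟨x0, hx0d⟩ ⟨x, hxd⟩ ⟨y0, hy0.2⟩ ⟨y, hyn⟩ (by simpa using lt_of_lt_of_le hx0 hx.1)
        (by simpa using lt_of_lt_of_le hy hy0.1) with h0 | h0
      · exact absurd (by simpa [bext, hx0d, hy0.2] using h0) hy0'
      · simpa [bext, hxd, hyn] using h0
    have heq2 : Bpart b d t = Bpart b m t := by
      rw [Bpart, Bpart, Finset.range_eq_Ico,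
        ← Finset.sum_Ico_consecutive _ (Nat.zero_le m) hm]
      have : ∑ x ∈ Finset.Ico m d, ∑ y ∈ Finset.Ico 0 t, bext b x y = 0 := by
        apply Finset.sum_eq_zero; intro x hx
        apply Finset.sum_eq_zero; intro y hy
        exact hzero x hx y (Finset.mem_range.mpr (Finset.mem_Ico.mp hy).2)
      rw [← Finset.range_eq_Ico] at this ⊢
      omega
    have := Bpart_le_right b m t ht
    omega

lemma noInv_eq_distrib {b : Fin d × Fin n →₀ ℕ} (h : NoInv b) :
    b = distrib n d (⇑(rowF b)) (colF b) := by
  ext p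
  obtain ⟨i, j⟩ := p
  rw [distrib_apply]
  dsimp only
  have hb : b (i, j) = bext b (i : ℕ) (j : ℕ) := by simp [bext, i.isLt, j.isLt]
  have e1 : Bpart b ((i : ℕ) + 1) ((j : ℕ) + 1)
      = Bpart b (i : ℕ) ((j : ℕ) + 1) + ∑ y ∈ Finset.range ((j : ℕ) + 1), bext b (i : ℕ) y :=
    Finset.sum_range_succ _ _
  have e2 : Bpart b ((i : ℕ) + 1) (j : ℕ)
      = Bpart b (i : ℕ) (j : ℕ) + ∑ y ∈ Finset.range (j : ℕ), bext b (i : ℕ) y :=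
    Finset.sum_range_succ _ _
  have e3 : ∑ y ∈ Finset.range ((j : ℕ) + 1), bext b (i : ℕ) y
      = ∑ y ∈ Finset.range (j : ℕ), bext b (i : ℕ) y + bext b (i : ℕ) (j : ℕ) :=
    Finset.sum_range_succ _ _
  have m1 := Bpart_eq_min h ((i : ℕ) + 1) ((j : ℕ) + 1) i.isLt j.isLt
  have m2 := Bpart_eq_min h (i : ℕ) ((j : ℕ) + 1) (le_of_lt i.isLt) j.isLt
  have m3 := Bpart_eq_min h ((i : ℕ) + 1) (j : ℕ) i.isLt (le_of_lt j.isLt)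
  have m4 := Bpart_eq_min h (i : ℕ) (j : ℕ) (le_of_lt i.isLt) (le_of_lt j.isLt)
  simp only [Bpart_right, Bpart_top] at m1 m2 m3 m4
  have c1 : cum (⇑(rowF b)) (i : ℕ) ≤ cum (⇑(rowF b)) ((i : ℕ) + 1) := cum_le_succ _ _
  have c2 : cum (⇑(colF b)) (j : ℕ) ≤ cum (⇑(colF b)) ((j : ℕ) + 1) := cum_le_succ _ _
  omega

end NoInv
section Straighten

variable {n d : ℕ}

/-- total degree of an exponent. -/
def degE (b : Fin d × Fin n →₀ ℕ) : ℕ := ∑ p : Fin d × Fin n, b p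

/-- the inversion potential. -/
def Pst (b : Fin d × Fin n →₀ ℕ) : ℕ := ∑ p : Fin d × Fin n, b p * ((p.1 : ℕ) * (p.2 : ℕ))

lemma degE_add (x y : Fin d × Fin n →₀ ℕ) : degE (x + y) = degE x + degE y := by
  simp [degE, Finset.sum_add_distrib]

lemma Pst_add (x y : Fin d × Fin n →₀ ℕ) : Pst (x + y) = Pst x + Pst y := by
  simp [Pst, add_mul, Finset.sum_add_distrib]

lemma degE_single (q : Fin d × Fin n) (c : ℕ) : degE (Finsupp.single q c) = c := by
  rw [degE, Finset.sum_eq_single q]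
  · simp
  · intro p _ hp; simp [Finsupp.single_apply, Ne.symm hp]
  · intro h; exact absurd (Finset.mem_univ q) h

lemma Pst_single (q : Fin d × Fin n) (c : ℕ) :
    Pst (Finsupp.single q c) = c * ((q.1 : ℕ) * (q.2 : ℕ)) := by
  rw [Pst, Finset.sum_eq_single q]
  · simp
  · intro p _ hp; simp [Finsupp.single_apply, Ne.symm hp]
  · intro h; exact absurd (Finset.mem_univ q) h

lemma Pst_le (b : Fin d × Fin n →₀ ℕ) : Pst b ≤ degE b * (d * n) := by
  rw [Pst, degE, Finset.sum_mul]
  apply Finset.sum_le_sum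
  intro p _
  apply Nat.mul_le_mul_left
  exact Nat.mul_le_mul (le_of_lt p.1.isLt) (le_of_lt p.2.isLt)

/-- the "sorted" exponent. -/
def sortE (b : Fin d × Fin n →₀ ℕ) : Fin d × Fin n →₀ ℕ := distrib n d (⇑(rowF b)) (colF b)

lemma swap_mem (i k : Fin d) (j l : Fin n) (hik : i < k) (hlj : l < j)
    (rest : Fin d × Fin n →₀ ℕ) :
    monomial (rest + Finsupp.single (i, j) 1 + Finsupp.single (k, l) 1) (1 : ℂ)
      - monomial (rest + Finsupp.single (i, l) 1 + Finsupp.single (k, j) 1) 1 ∈ IR n d := by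
  have hgen : (X (i, l) * X (k, j) - X (i, j) * X (k, l) :
      MvPolynomial (Fin d × Fin n) ℂ) ∈ IR n d :=
    Ideal.subset_span ⟨i, k, l, j, hik, hlj, rfl⟩
  have hre : monomial (rest + Finsupp.single (i, j) 1 + Finsupp.single (k, l) 1) (1 : ℂ)
      - monomial (rest + Finsupp.single (i, l) 1 + Finsupp.single (k, j) 1) 1
      = monomial rest 1 * -(X (i, l) * X (k, j) - X (i, j) * X (k, l)) := by
    rw [monomial_add_single, monomial_add_single, monomial_add_single, monomial_add_single]
    ring
  rw [hre]
  exact Ideal.mul_mem_left _ _ (neg_mem hgen)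

lemma rearrange {a b c e : ℕ} (hab : a < b) (hce : c < e) :
    a * e + b * c < a * c + b * e := by
  have h1 : a * (e - c) < b * (e - c) :=
    Nat.mul_lt_mul_of_lt_of_le hab (le_refl _) (by omega)
  have h2 : a * (e - c) = a * e - a * c := Nat.mul_sub a e c
  have h3 : b * (e - c) = b * e - b * c := Nat.mul_sub b e c
  have h4 : a * c ≤ a * e := Nat.mul_le_mul_left a (le_of_lt hce)
  have h5 : b * c ≤ b * e := Nat.mul_le_mul_left b (le_of_lt hce)
  omega

lemma sort_mem_aux : ∀ (N : ℕ) (b : Fin d × Fin n →₀ ℕ),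
    degE b * (d * n) - Pst b ≤ N →
    monomial b (1 : ℂ) - monomial (sortE b) 1 ∈ IR n d := by
  intro N
  induction N with
  | zero =>
    intro b hN
    by_cases hInv : NoInv b
    · rw [sortE, ← noInv_eq_distrib hInv, sub_self]; exact zero_mem _
    · exfalso
      simp only [NoInv, not_forall, not_or] at hInv
      obtain ⟨i, k, j, l, hik, hlj, hbij, hbkl⟩ := hInv
      -- build the swap
      have hne : ((i, j) : Fin d × Fin n) ≠ (k, l) := fun hc => absurd (congrArg Prod.fst hc)
        (ne_of_lt hik)
      set rest := b - Finsupp.single (i, j) 1 - Finsupp.single (k, l) 1 with hrest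
      have hb : b = rest + Finsupp.single (i, j) 1 + Finsupp.single (k, l) 1 := by
        ext p
        simp only [hrest, Finsupp.add_apply, Finsupp.tsub_apply, Finsupp.single_apply]
        by_cases h1 : (i, j) = p <;> by_cases h2 : (k, l) = p
        · exact absurd (h1.trans h2.symm) hne
        · subst h1; simp [h2]; omega
        · subst h2; simp [h1]; omega
        · simp [h1, h2]
      set b' := rest + Finsupp.single (i, l) 1 + Finsupp.single (k, j) 1 with hb'
      have hdeg : degE b' = degE b := by
        rw [hb', hb]; simp [degE_add, degE_single]
      have hPst : Pst b < Pst b' := by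
        rw [hb', hb]
        simp only [Pst_add, Pst_single, one_mul]
        have := rearrange (a := (i : ℕ)) (b := (k : ℕ)) (c := (l : ℕ)) (e := (j : ℕ))
          (by exact_mod_cast hik) (by exact_mod_cast hlj)
        omega
      have hle := Pst_le b'
      rw [hdeg] at hle
      omega
  | succ N ih =>
    intro b hN
    by_cases hInv : NoInv b
    · rw [sortE, ← noInv_eq_distrib hInv, sub_self]; exact zero_mem _
    · simp only [NoInv, not_forall, not_or] at hInv
      obtain ⟨i, k, j, l, hik, hlj, hbij, hbkl⟩ := hInv
      have hne : ((i, j) : Fin d × Fin n) ≠ (k, l) := fun hc => absurd (congrArg Prod.fst hc)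
        (ne_of_lt hik)
      set rest := b - Finsupp.single (i, j) 1 - Finsupp.single (k, l) 1 with hrest
      have hb : b = rest + Finsupp.single (i, j) 1 + Finsupp.single (k, l) 1 := by
        ext p
        simp only [hrest, Finsupp.add_apply, Finsupp.tsub_apply, Finsupp.single_apply]
        by_cases h1 : (i, j) = p <;> by_cases h2 : (k, l) = p
        · exact absurd (h1.trans h2.symm) hne
        · subst h1; simp [h2]; omega
        · subst h2; simp [h1]; omega
        · simp [h1, h2]
      set b' := rest + Finsupp.single (i, l) 1 + Finsupp.single (k, j) 1 with hb'
      have hdeg : degE b' = degE b := by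
        rw [hb', hb]; simp [degE_add, degE_single]
      have hPst : Pst b < Pst b' := by
        rw [hb', hb]
        simp only [Pst_add, Pst_single, one_mul]
        have := rearrange (a := (i : ℕ)) (b := (k : ℕ)) (c := (l : ℕ)) (e := (j : ℕ))
          (by exact_mod_cast hik) (by exact_mod_cast hlj)
        omega
      have hrow : rowF b' = rowF b := by
        rw [hb', hb]
        simp only [rowF, Finsupp.mapDomain_add, Finsupp.mapDomain_single]
        try abel
      have hcol : colF b' = colF b := by
        rw [hb', hb]
        simp only [colF, Finsupp.mapDomain_add, Finsupp.mapDomain_single]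
        try abel
      have hsort : sortE b' = sortE b := by rw [sortE, sortE, hrow, hcol]
      have hmem1 : monomial b (1 : ℂ) - monomial b' 1 ∈ IR n d := by
        rw [hb, hb']
        exact swap_mem i k j l hik hlj rest
      have hmem2 : monomial b' (1 : ℂ) - monomial (sortE b') 1 ∈ IR n d := by
        apply ih
        rw [hdeg]
        have hle := Pst_le b'
        rw [hdeg] at hle
        omega
      have : monomial b (1 : ℂ) - monomial (sortE b) 1
          = (monomial b 1 - monomial b' 1) + (monomial b' 1 - monomial (sortE b') 1) := by
        rw [hsort]; ring
      rw [this]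
      exact add_mem hmem1 hmem2

lemma sort_mem (b : Fin d × Fin n →₀ ℕ) :
    monomial b (1 : ℂ) - monomial (sortE b) 1 ∈ IR n d :=
  sort_mem_aux _ b le_rfl

end Straighten
section PhiSec

variable (n d : ℕ) (I : Ideal (MvPolynomial (Fin n) ℂ))

/-- the comparison map `Φ : S → (V/I)[x_1,…,x_d]`, `α_{i,j} ↦ x_i ⊗ [β_j]`. -/
def Phi : MvPolynomial (Fin d × Fin n) ℂ →ₐ[ℂ]
    MvPolynomial (Fin d) (MvPolynomial (Fin n) ℂ ⧸ I) :=
  aeval fun p => X p.1 * C (Ideal.Quotient.mk I (X p.2))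

variable {n d}

lemma degree_eq_sum {m : ℕ} (γ : Fin m →₀ ℕ) : γ.degree = ∑ j : Fin m, γ j := by
  rw [Finsupp.degree]
  symm
  apply (Finset.sum_subset (Finset.subset_univ _) ?_).symm
  intro x _ hx
  exact Finsupp.notMem_support_iff.mp hx

lemma finsupp_prod_X_pow {σ τ R : Type*} [CommSemiring R] (f : σ → τ) (b : σ →₀ ℕ) :
    (b.prod fun p e => (X (f p) : MvPolynomial τ R) ^ e)
      = monomial (b.mapDomain f) 1 := by
  have h1 : (monomial b (1 : R)) = b.prod fun p e => (X p : MvPolynomial σ R) ^ e := by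
    rw [monomial_eq]; simp
  have h2 : (b.prod fun p e => (X (f p) : MvPolynomial τ R) ^ e)
      = rename f (b.prod fun p e => (X p : MvPolynomial σ R) ^ e) := by
    rw [Finsupp.prod, Finsupp.prod, map_prod]
    simp
  rw [h2, ← h1, rename_monomial]

lemma Phi_monomial (b : Fin d × Fin n →₀ ℕ) (c : ℂ) :
    Phi n d I (monomial b c)
      = monomial (rowF b) (Ideal.Quotient.mk I (monomial (colF b) c)) := by
  rw [Phi, aeval_monomial]
  have h1 : (b.prod fun p e =>
        ((X p.1 : MvPolynomial (Fin d) (MvPolynomial (Fin n) ℂ ⧸ I))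
          * C (Ideal.Quotient.mk I (X p.2))) ^ e)
      = (b.prod fun p e => (X p.1 : MvPolynomial (Fin d) (MvPolynomial (Fin n) ℂ ⧸ I)) ^ e)
        * (b.prod fun p e =>
            (C (Ideal.Quotient.mk I (X p.2)) : MvPolynomial (Fin d) (MvPolynomial (Fin n) ℂ ⧸ I)) ^ e) := by
    rw [Finsupp.prod, Finsupp.prod, Finsupp.prod, ← Finset.prod_mul_distrib]
    exact Finset.prod_congr rfl fun p _ => mul_pow _ _ _
  have h2 : (b.prod fun p e =>
        (C (Ideal.Quotient.mk I (X p.2)) : MvPolynomial (Fin d) (MvPolynomial (Fin n) ℂ ⧸ I)) ^ e)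
      = C (Ideal.Quotient.mk I (b.prod fun p e => (X p.2 : MvPolynomial (Fin n) ℂ) ^ e)) := by
    rw [Finsupp.prod, Finsupp.prod, map_prod, map_prod]
    simp
  rw [h1, h2, finsupp_prod_X_pow, finsupp_prod_X_pow]
  rw [show (b.mapDomain Prod.fst) = rowF b from rfl, show (b.mapDomain Prod.snd) = colF b from rfl]
  rw [show (algebraMap ℂ (MvPolynomial (Fin d) (MvPolynomial (Fin n) ℂ ⧸ I))) c
      = C (Ideal.Quotient.mk I (C c)) from rfl]
  have hfact : C ((Ideal.Quotient.mk I) (C c))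
      * (C ((Ideal.Quotient.mk I) ((monomial (colF b)) 1)) * monomial (rowF b) 1)
      = monomial (rowF b) (Ideal.Quotient.mk I ((monomial (colF b)) c)) := by
    rw [C_mul_monomial, mul_one, C_mul_monomial, ← map_mul, C_mul_monomial, mul_one]
  rw [← hfact]
  ring

lemma Phi_IR {x : MvPolynomial (Fin d × Fin n) ℂ} (hx : x ∈ IR n d) : Phi n d I x = 0 := by
  have : IR n d ≤ RingHom.ker (Phi n d I).toRingHom := by
    rw [IR, Ideal.span_le]
    rintro q ⟨i, k, j, l, hik, hjl, rfl⟩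
    simp only [SetLike.mem_coe, RingHom.mem_ker, AlgHom.toRingHom_eq_coe, RingHom.coe_coe,
      map_sub, map_mul]
    rw [Phi]
    simp only [aeval_X]
    ring
  exact this hx

lemma psi_monomial (u : Fin d → ℕ) (γ : Fin n →₀ ℕ) (c : ℂ) :
    psi n d u (monomial γ c) = monomial (distrib n d u γ) c := by
  rw [psi]
  exact AddMonoidAlgebra.mapDomainLinearMap_single _ _ _

lemma Phi_psi (u : Fin d → ℕ) (p : MvPolynomial (Fin n) ℂ) (hp : p ∈ Vcomp n (∑ i, u i)) :
    Phi n d I (psi n d u p)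
      = monomial (Finsupp.equivFunOnFinite.symm u) (Ideal.Quotient.mk I p) := by
  have hp' : p.IsHomogeneous (∑ i, u i) := (mem_homogeneousSubmodule _ _).mp hp
  conv_lhs => rw [p.as_sum]
  rw [map_sum, map_sum]
  have key : ∀ γ ∈ p.support, Phi n d I (psi n d u (monomial γ (coeff γ p)))
      = monomial (Finsupp.equivFunOnFinite.symm u) (Ideal.Quotient.mk I (monomial γ (coeff γ p))) := by
    intro γ hγ
    have hdeg : γ.degree = ∑ i, u i := by
      have := hp' (Finsupp.mem_support_iff.mp hγ)
      rw [Finsupp.degree_eq_weight_one]; exact this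
    have htot : cum (⇑γ) n = cum u d := by
      rw [cum_top, cum_top, ← degree_eq_sum, hdeg]
    rw [psi_monomial, Phi_monomial]
    have e1 : rowF (distrib n d u γ) = Finsupp.equivFunOnFinite.symm u := by
      ext i
      rw [rowF_distrib n d u γ htot i, Finsupp.coe_equivFunOnFinite_symm]
    have e2 : colF (distrib n d u γ) = γ := by
      ext j
      exact colF_distrib n d u γ htot j
    rw [e1, e2]
  rw [Finset.sum_congr rfl key, ← map_sum, ← map_sum, ← p.as_sum]

end PhiSec
section Main

variable {n d : ℕ} {I : Ideal (MvPolynomial (Fin n) ℂ)}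

lemma upsilon_le_ker :
    Upsilon n d I ≤ LinearMap.ker (Phi n d I).toLinearMap := by
  rw [Upsilon]
  apply sup_le
  · intro x hx
    simp only [LinearMap.mem_ker, AlgHom.toLinearMap_apply]
    exact Phi_IR I hx
  · apply iSup_le
    intro u x hx
    obtain ⟨p, ⟨hpI, hpV⟩, rfl⟩ := Submodule.mem_map.mp hx
    simp only [LinearMap.mem_ker, AlgHom.toLinearMap_apply]
    rw [Phi_psi I u p hpV, Ideal.Quotient.eq_zero_iff_mem.mpr hpI, map_zero]

lemma mem_upsilon_iff (x : MvPolynomial (Fin d × Fin n) ℂ) :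
    x ∈ Upsilon n d I ↔ Phi n d I x = 0 := by
  constructor
  · intro hx
    exact LinearMap.mem_ker.mp (upsilon_le_ker hx)
  · intro hPhi
    set θ : MvPolynomial (Fin d × Fin n) ℂ :=
      ∑ b ∈ x.support, monomial (sortE b) (coeff b x) with hθdef
    set Ufin : Finset (Fin d → ℕ) := x.support.image (fun b => ⇑(rowF b)) with hUdef
    set pu : (Fin d → ℕ) → MvPolynomial (Fin n) ℂ := fun u =>
      ∑ b ∈ x.support.filter (fun b => ⇑(rowF b) = u), monomial (colF b) (coeff b x) with hpudef
    -- Step A : x - θ ∈ I_R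
    have stepA : x - θ ∈ IR n d := by
      have hsub : x - θ = ∑ b ∈ x.support,
          (monomial b (coeff b x) - monomial (sortE b) (coeff b x)) := by
        rw [Finset.sum_sub_distrib, ← x.as_sum]
      rw [hsub]
      apply sum_mem
      intro b _
      have : monomial b (coeff b x) - monomial (sortE b) (coeff b x)
          = C (coeff b x) * (monomial b 1 - monomial (sortE b) 1) := by
        rw [mul_sub, C_mul_monomial, C_mul_monomial, mul_one]
      rw [this]
      exact Ideal.mul_mem_left _ _ (sort_mem b)
    -- Step B : θ regrouped along row contents
    have stepB : θ = ∑ u ∈ Ufin, psi n d u (pu u) := by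
      have h1 : ∀ u ∈ Ufin, psi n d u (pu u)
          = ∑ b ∈ x.support.filter (fun b => ⇑(rowF b) = u),
              monomial (sortE b) (coeff b x) := by
        intro u _
        rw [hpudef, map_sum]
        apply Finset.sum_congr rfl
        intro b hb
        rw [psi_monomial]
        have hrb : ⇑(rowF b) = u := (Finset.mem_filter.mp hb).2
        rw [sortE, hrb]
      rw [Finset.sum_congr rfl h1,
        Finset.sum_fiberwise_of_maps_to (fun b hb => Finset.mem_image_of_mem _ hb)
          (fun b => monomial (sortE b) (coeff b x))]
    -- Step C : homogeneity of the pieces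
    have stepC : ∀ u, pu u ∈ Vcomp n (∑ i, u i) := by
      intro u
      rw [hpudef]
      apply sum_mem
      intro b hb
      have hrb : ⇑(rowF b) = u := (Finset.mem_filter.mp hb).2
      have hdeg : (colF b).degree = ∑ i, u i := by
        rw [degree_eq_sum]
        have h2 : ∑ j : Fin n, colF b j = ∑ i : Fin d, rowF b i := by
          simp only [colF_apply, rowF_apply]
          exact Finset.sum_comm
        rw [h2]
        exact Finset.sum_congr rfl fun i _ => congrFun hrb i
      exact (mem_homogeneousSubmodule _ _).mpr (isHomogeneous_monomial _ hdeg)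
    -- Step D : the pieces lie in I
    have hθ0 : Phi n d I θ = 0 := by
      have h3 := Phi_IR I stepA
      rw [map_sub, hPhi] at h3
      exact (sub_eq_zero.mp h3).symm
    have hsum0 : ∑ u ∈ Ufin, monomial (Finsupp.equivFunOnFinite.symm u)
        (Ideal.Quotient.mk I (pu u)) = 0 := by
      rw [← Finset.sum_congr rfl (fun u _ => Phi_psi I u (pu u) (stepC u)),
        ← map_sum, ← stepB, hθ0]
    have stepD : ∀ u ∈ Ufin, pu u ∈ I := by
      intro u0 hu0
      have h4 := congrArg (coeff (Finsupp.equivFunOnFinite.symm u0)) hsum0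
      rw [MvPolynomial.coeff_sum] at h4
      rw [Finset.sum_eq_single_of_mem u0 hu0 ?side] at h4
      · rw [coeff_monomial, if_pos rfl, coeff_zero] at h4
        exact Ideal.Quotient.eq_zero_iff_mem.mp h4
      case side =>
        intro u hu hne
        rw [coeff_monomial, if_neg]
        intro hc
        exact hne (Finsupp.equivFunOnFinite.symm.injective hc)
    -- conclude
    have hxθ : x = (x - θ) + θ := by ring
    rw [hxθ]
    apply Submodule.add_mem
    · apply Submodule.mem_sup_left
      simpa using stepA
    · rw [stepB]
      apply sum_mem
      intro u hu
      apply Submodule.mem_sup_right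
      apply Submodule.mem_iSup_of_mem u
      exact Submodule.mem_map_of_mem ⟨stepD u hu, stepC u⟩

lemma isReduced_polynomial (R : Type*) [CommRing R] [IsReduced R] :
    IsReduced (Polynomial R) := by
  constructor
  intro p hp
  have h := Polynomial.isNilpotent_iff.mp hp
  ext i
  simpa using IsReduced.eq_zero _ (h i)

lemma isReduced_mvpoly (R : Type*) [CommRing R] [IsReduced R] (m : ℕ) :
    IsReduced (MvPolynomial (Fin m) R) := by
  induction m with
  | zero =>
    exact isReduced_of_injective (MvPolynomial.isEmptyRingEquiv R (Fin 0)).toRingHom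
      (RingEquiv.injective _)
  | succ m ih =>
    haveI := ih
    haveI : IsReduced (Polynomial (MvPolynomial (Fin m) R)) := isReduced_polynomial _
    exact isReduced_of_injective (MvPolynomial.finSuccEquiv R m).toAlgHom.toRingHom
      (AlgEquiv.injective _)

end Main
/-- Proposition 4.4: if `I ⊆ V` is a homogeneous radical ideal,
then `Υ(I)` is a radical ideal of `S`. -/
theorem stmt_6 (n d : ℕ) (hn : 0 < n) (hd : 0 < d)
    (I : Ideal (MvPolynomial (Fin n) ℂ)) (hhom : IsHomogV n I)
    (hrad : I.IsRadical) :
    (∀ s x : MvPolynomial (Fin d × Fin n) ℂ,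
        x ∈ Upsilon n d I → s * x ∈ Upsilon n d I) ∧
      (∀ (f : MvPolynomial (Fin d × Fin n) ℂ) (k : ℕ), k ≠ 0 →
        f ^ k ∈ Upsilon n d I → f ∈ Upsilon n d I) := by
  haveI hQ : IsReduced (MvPolynomial (Fin n) ℂ ⧸ I) :=
    (Ideal.isRadical_iff_quotient_reduced I).mp hrad
  haveI : IsReduced (MvPolynomial (Fin d) (MvPolynomial (Fin n) ℂ ⧸ I)) :=
    isReduced_mvpoly _ d
  constructor
  · intro s x hx
    rw [mem_upsilon_iff] at hx ⊢
    rw [map_mul, hx, mul_zero]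
  · intro f k hk hf
    rw [mem_upsilon_iff] at hf ⊢
    rw [map_pow] at hf
    exact IsReduced.eq_zero _ ⟨k, hf⟩

end BorderComon
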